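/- Let t ≥ 1 and let C_1, ..., C_t ⊆ F_q^n be linear codes of dimensions k_1, ..., k_t with nonzero product C_1*...*C_t; if t ≥ 3, assume the support condition holds (every coordinate is either in the support of all C_i or in the support of at most one of them). Then dmin(C_1*...*C_t) ≤ max(t - 1, n + t - (k_1 + ... + k_t)). -/

import Mathlib

noncomputable section

/-- The componentwise product code of two linear codes. -/
def prodCode (F : Type*) [Field F] {n : ℕ}
    (C C' : Submodule F (Fin n → F)) : Submodule F (Fin n → F) :=
  Submodule.span F {z | ∃ c ∈ C, ∃ c' ∈ C', z = c * c'}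

/-- The t-fold componentwise power of a code (convention: 0th power is ⊤). -/
def powCode (F : Type*) [Field F] {n : ℕ} (C : Submodule F (Fin n → F)) :
    ℕ → Submodule F (Fin n → F)
  | 0 => ⊤
  | 1 => C
  | (t+2) => prodCode F (powCode F C (t+1)) C

/-- Minimum distance: minimum Hamming weight of a nonzero codeword. -/
def dmin {F : Type*} [Field F] [DecidableEq F] {n : ℕ}
    (C : Submodule F (Fin n → F)) : ℕ :=
  sInf {w | ∃ c ∈ C, c ≠ 0 ∧ hammingNorm c = w}

/-- The dual code with respect to the standard bilinear form. -/
def dualCode (F : Type*) [Field F] {n : ℕ}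
    (C : Submodule F (Fin n → F)) : Submodule F (Fin n → F) where
  carrier := {x | ∀ c ∈ C, ∑ i, x i * c i = 0}
  zero_mem' := by intro c hc; simp
  add_mem' := by
    intro a b ha hb c hc
    have h : ∑ i, (a + b) i * c i = (∑ i, a i * c i) + ∑ i, b i * c i := by
      simp [add_mul, Finset.sum_add_distrib]
    simp only [Set.mem_setOf_eq] at *
    rw [h, ha c hc, hb c hc, add_zero]
  smul_mem' := by
    intro r a ha c hc
    simp only [Pi.smul_apply, smul_eq_mul, mul_assoc, ← Finset.mul_sum, Set.mem_setOf_eq] at *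
    rw [ha c hc, mul_zero]

/-- A code has full support if every coordinate carries a nonzero codeword value. -/
def fullSupport (F : Type*) [Field F] {n : ℕ} (C : Submodule F (Fin n → F)) : Prop :=
  ∀ j, ∃ c ∈ C, c j ≠ 0

/-- Product code of a family of codes. -/
def prodFamily (F : Type*) [Field F] {n t : ℕ}
    (C : Fin t → Submodule F (Fin n → F)) : Submodule F (Fin n → F) :=
  Submodule.span F {z | ∃ c : Fin t → (Fin n → F), (∀ i, c i ∈ C i) ∧ z = ∏ i, c i}


namespace PSB

set_option linter.unusedSectionVars false

open Finset Module Submodule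

variable {F : Type*} [Field F] [DecidableEq F]
variable {ι : Type} [Fintype ι] [DecidableEq ι]

/-- Functions vanishing outside `S`. -/
def suppSub (F : Type*) [Field F] {ι : Type} (S : Finset ι) : Submodule F (ι → F) where
  carrier := {f | ∀ j, j ∉ S → f j = 0}
  add_mem' := by intro a b ha hb j hj; simp [ha j hj, hb j hj]
  zero_mem' := by intro j hj; rfl
  smul_mem' := by intro r f hf j hj; simp [hf j hj]

lemma mem_suppSub {S : Finset ι} {f : ι → F} : f ∈ suppSub F S ↔ ∀ j, j ∉ S → f j = 0 :=
  Iff.rfl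

/-- Restriction of coordinates to a subset. -/
def res (F : Type*) [Field F] {ι : Type} (S : Finset ι) : (ι → F) →ₗ[F] (↥S → F) :=
  LinearMap.funLeft F F (fun x => (x : ι))

lemma res_apply {S : Finset ι} (f : ι → F) (x : ↥S) : res F S f x = f (x : ι) := rfl

lemma res_eq_zero_iff {S : Finset ι} {f : ι → F} : res F S f = 0 ↔ ∀ j ∈ S, f j = 0 := by
  constructor
  · intro h j hj
    have := congrFun h ⟨j, hj⟩
    simpa [res_apply] using this
  · intro h; funext x; exact h x.1 x.2

lemma eq_zero_of_res_eq_zero {S : Finset ι} {f : ι → F} (hf : f ∈ suppSub F S)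
    (h : res F S f = 0) : f = 0 := by
  funext j
  by_cases hj : j ∈ S
  · exact res_eq_zero_iff.1 h j hj
  · exact hf j hj

/-- The product code of a family, general index version. -/
def myProd {t : ℕ} (C : Fin t → Submodule F (ι → F)) : Submodule F (ι → F) :=
  Submodule.span F {z | ∃ c : Fin t → (ι → F), (∀ i, c i ∈ C i) ∧ z = ∏ i, c i}

lemma prod_mem_myProd {t : ℕ} {C : Fin t → Submodule F (ι → F)} {c : Fin t → (ι → F)}
    (hc : ∀ i, c i ∈ C i) : (∏ i, c i) ∈ myProd C :=
  Submodule.subset_span ⟨c, hc, rfl⟩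

lemma myProd_mono {t : ℕ} {C C' : Fin t → Submodule F (ι → F)} (h : ∀ i, C' i ≤ C i) :
    myProd C' ≤ myProd C :=
  Submodule.span_mono (by rintro z ⟨c, hc, rfl⟩; exact ⟨c, fun i => h i (hc i), rfl⟩)

lemma res_prod {S : Finset ι} {t : ℕ} (c : Fin t → (ι → F)) :
    res F S (∏ i, c i) = ∏ i, res F S (c i) := by
  funext x
  simp only [res_apply, Finset.prod_apply]

lemma map_res_myProd {S : Finset ι} {t : ℕ} (C : Fin t → Submodule F (ι → F)) :
    Submodule.map (res F S) (myProd C) = myProd (fun i => Submodule.map (res F S) (C i)) := by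
  unfold myProd
  rw [Submodule.map_span]
  congr 1
  ext z
  constructor
  · rintro ⟨w, ⟨c, hc, rfl⟩, rfl⟩
    exact ⟨fun i => res F S (c i), fun i => ⟨c i, hc i, rfl⟩, res_prod c⟩
  · rintro ⟨c', hc', rfl⟩
    choose c hc hce using hc'
    refine ⟨∏ i, c i, ⟨c, hc, rfl⟩, ?_⟩
    rw [res_prod]
    exact Finset.prod_congr rfl fun i _ => hce i


-- Hamming norm lemmas
lemma norm_le_card_of_suppSub {S : Finset ι} {f : ι → F} (hf : f ∈ suppSub F S) :
    hammingNorm f ≤ S.card := by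
  unfold hammingNorm
  apply Finset.card_le_card
  intro j hj
  simp only [Finset.mem_filter, Finset.mem_univ, true_and] at hj
  by_contra hjS
  exact hj (hf j hjS)

lemma norm_res_eq {S : Finset ι} {f : ι → F} (hf : f ∈ suppSub F S) :
    hammingNorm (res F S f) = hammingNorm f := by
  unfold hammingNorm
  apply Finset.card_bij (fun (x : ↥S) _ => (x : ι))
  · intro a ha
    simp only [Finset.mem_filter, Finset.mem_univ, true_and] at ha ⊢
    exact ha
  · intro a _ b _ hab; exact Subtype.ext hab
  · intro b hb
    simp only [Finset.mem_filter, Finset.mem_univ, true_and] at hb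
    have hbS : b ∈ S := by by_contra hb'; exact hb (hf b hb')
    exact ⟨⟨b, hbS⟩, by simp only [Finset.mem_filter, Finset.mem_univ, true_and]; exact hb, rfl⟩

lemma norm_mono_support {f g : ι → F} (h : ∀ j, f j ≠ 0 → g j ≠ 0) :
    hammingNorm f ≤ hammingNorm g := by
  unfold hammingNorm
  apply Finset.card_le_card
  intro j hj
  simp only [Finset.mem_filter, Finset.mem_univ, true_and] at hj ⊢
  exact h j hj

-- finrank machinery
set_option synthInstance.maxHeartbeats 1000000 in
set_option maxHeartbeats 1000000 in
lemma finrank_map_res_add (S : Finset ι) (V : Submodule F (ι → F)) :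
    finrank F (Submodule.map (res F S) V) + finrank F ↥(V ⊓ suppSub F Sᶜ) = finrank F V := by
  have h := LinearMap.finrank_range_add_finrank_ker ((res F S).domRestrict V)
  rw [LinearMap.range_domRestrict] at h
  have hker : LinearMap.ker ((res F S).domRestrict V)
      = Submodule.comap V.subtype (V ⊓ suppSub F Sᶜ) := by
    ext ⟨v, hv⟩
    simp only [LinearMap.mem_ker, LinearMap.domRestrict_apply, Submodule.mem_comap,
      Submodule.subtype_apply, Submodule.mem_inf]
    constructor
    · intro h0
      refine ⟨hv, fun j hj => ?_⟩
      have hjS : j ∈ S := by simpa using hj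
      exact congrFun h0 ⟨j, hjS⟩
    · intro ⟨_, h0⟩
      funext x
      exact h0 x.1 (by simp [x.2])
  have e : finrank F ↥(Submodule.comap V.subtype (V ⊓ suppSub F Sᶜ))
      = finrank F ↥(V ⊓ suppSub F Sᶜ) :=
    (Submodule.comapSubtypeEquivOfLe (inf_le_left : V ⊓ suppSub F Sᶜ ≤ V)).finrank_eq
  rw [hker, e] at h
  exact h

lemma finrank_le_card_of_le_suppSub {S : Finset ι} {V : Submodule F (ι → F)}
    (h : V ≤ suppSub F S) : finrank F V ≤ S.card := by
  have heq := finrank_map_res_add S V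
  have hbot : V ⊓ suppSub F Sᶜ = ⊥ := by
    rw [eq_bot_iff]
    rintro v ⟨hv1, hv2⟩
    have : v = 0 := by
      funext j
      by_cases hj : j ∈ S
      · exact hv2 j (by simp [hj])
      · exact h hv1 j hj
    simp [this]
  rw [hbot] at heq
  simp only [finrank_bot, add_zero] at heq
  calc finrank F V = finrank F (Submodule.map (res F S) V) := heq.symm
    _ ≤ finrank F (↥S → F) := Submodule.finrank_le _
    _ = S.card := by rw [Module.finrank_pi]; exact Fintype.card_coe S

lemma ne_bot_of_finrank_pos {V : Submodule F (ι → F)} (h : 0 < finrank F V) : V ≠ ⊥ := by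
  intro hbot
  rw [hbot, finrank_bot] at h
  omega

lemma exists_vanish_ne_zero {V : Submodule F (ι → F)} (h2 : 2 ≤ finrank F V) (j : ι) :
    ∃ v ∈ V, v ≠ 0 ∧ v j = 0 := by
  have heq := finrank_map_res_add {j} V
  have hle : finrank F (Submodule.map (res F {j}) V) ≤ 1 := by
    calc finrank F (Submodule.map (res F {j}) V) ≤ finrank F (↥({j} : Finset ι) → F) :=
          Submodule.finrank_le _
      _ = 1 := by rw [Module.finrank_pi, Fintype.card_coe, Finset.card_singleton]
  have hpos : 0 < finrank F ↥(V ⊓ suppSub F ({j} : Finset ι)ᶜ) := by omega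
  obtain ⟨v, hv, hv0⟩ := (Submodule.ne_bot_iff _).1 (ne_bot_of_finrank_pos hpos)
  exact ⟨v, hv.1, hv0, hv.2 j (by simp)⟩


-- full support, proportionality classes
def fullS (C : Submodule F (ι → F)) : Prop := ∀ j, ∃ c ∈ C, c j ≠ 0

def jRel (C : Submodule F (ι → F)) (j y : ι) : Prop :=
  ∃ β : F, β ≠ 0 ∧ ∀ c ∈ C, c y = β * c j

def Rcls (C : Submodule F (ι → F)) (j : ι) : Finset ι :=
  @Finset.filter _ (fun y => jRel C j y) (Classical.decPred _) Finset.univ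

lemma mem_Rcls {C : Submodule F (ι → F)} {j y : ι} : y ∈ Rcls C j ↔ jRel C j y := by
  have := @Finset.mem_filter _ (fun y => jRel C j y) (Classical.decPred _) Finset.univ y
  unfold Rcls
  simpa using this

lemma self_mem_Rcls {C : Submodule F (ι → F)} {j : ι} : j ∈ Rcls C j :=
  mem_Rcls.2 ⟨1, one_ne_zero, fun c _ => by ring⟩

lemma jRel_of_imp {C : Submodule F (ι → F)} {j y : ι} (hfs : fullS C)
    (h : ∀ c ∈ C, c j = 0 → c y = 0) : jRel C j y := by
  obtain ⟨c₀, hc₀, hc₀j⟩ := hfs j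
  refine ⟨c₀ y / c₀ j, ?_, ?_⟩
  · obtain ⟨c₁, hc₁, hc₁y⟩ := hfs y
    intro hβ
    have hy0 : c₀ y = 0 := by
      field_simp at hβ
      rwa [mul_zero] at hβ
    have : ∀ c ∈ C, c y = 0 := by
      intro c hc
      have hmem : c - (c j / c₀ j) • c₀ ∈ C := C.sub_mem hc (C.smul_mem _ hc₀)
      have hj0 : (c - (c j / c₀ j) • c₀) j = 0 := by
        simp only [Pi.sub_apply, Pi.smul_apply, smul_eq_mul]
        field_simp
        ring
      have := h _ hmem hj0
      simp only [Pi.sub_apply, Pi.smul_apply, smul_eq_mul] at this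
      rw [hy0, mul_zero, sub_zero] at this
      exact this
    exact hc₁y (this c₁ hc₁)
  · intro c hc
    have hmem : c - (c j / c₀ j) • c₀ ∈ C := C.sub_mem hc (C.smul_mem _ hc₀)
    have hj0 : (c - (c j / c₀ j) • c₀) j = 0 := by
      simp only [Pi.sub_apply, Pi.smul_apply, smul_eq_mul]
      field_simp
      ring
    have hy0 := h _ hmem hj0
    simp only [Pi.sub_apply, Pi.smul_apply, smul_eq_mul] at hy0
    have : c y = c j / c₀ j * c₀ y := by
      exact sub_eq_zero.1 hy0
    rw [this]
    ring

lemma vanish_on_Rcls {C : Submodule F (ι → F)} {j : ι} {c : ι → F} (hc : c ∈ C)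
    (hj : c j = 0) : ∀ y ∈ Rcls C j, c y = 0 := by
  intro y hy
  obtain ⟨β, _, hβ⟩ := mem_Rcls.1 hy
  rw [hβ c hc, hj, mul_zero]

lemma finrank_map_res_Rcls_le_one (C : Submodule F (ι → F)) (j : ι) :
    finrank F (Submodule.map (res F (Rcls C j)) C) ≤ 1 := by
  set R := Rcls C j with hR
  have hβ : ∀ x : ↥R, ∃ β : F, β ≠ 0 ∧ ∀ c ∈ C, c x.1 = β * c j :=
    fun x => mem_Rcls.1 x.2
  choose p hp0 hp using hβ
  have hsub : Submodule.map (res F R) C ≤ Submodule.span F {p} := by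
    rintro z ⟨c, hc, rfl⟩
    have : res F R c = c j • p := by
      funext x
      simp only [res_apply, Pi.smul_apply, smul_eq_mul]
      rw [hp x c hc]
      ring
    rw [this]
    exact Submodule.smul_mem _ _ (Submodule.mem_span_singleton_self p)
  calc finrank F (Submodule.map (res F R) C) ≤ finrank F (Submodule.span F {p}) :=
        Submodule.finrank_mono hsub
    _ ≤ 1 := by
        by_cases hp : p = 0
        · rw [hp, Submodule.span_zero_singleton, finrank_bot]
          omega
        · rw [finrank_span_singleton hp]

-- lifting a witness from a restricted product
lemma lift_witness {S : Finset ι} {t : ℕ} {C C' : Fin t → Submodule F (ι → F)}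
    (hle : ∀ i, C' i ≤ C i) (hs : myProd C' ≤ suppSub F S) {z' : ↥S → F}
    (hz' : z' ∈ myProd (fun i => Submodule.map (res F S) (C' i))) (hz'0 : z' ≠ 0) :
    ∃ z ∈ myProd C, z ≠ 0 ∧ hammingNorm z = hammingNorm z' := by
  rw [← map_res_myProd] at hz'
  obtain ⟨z, hz, rfl⟩ := hz'
  refine ⟨z, myProd_mono hle hz, ?_, (norm_res_eq (hs hz)).symm⟩
  intro h0
  apply hz'0
  rw [h0]
  exact map_zero _

set_option maxHeartbeats 1000000 in
theorem main (N : ℕ) : ∀ (ι : Type) [Fintype ι] [DecidableEq ι],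
    Fintype.card ι ≤ N →
    ∀ (t : ℕ) (C : Fin t → Submodule F (ι → F)),
    myProd C ≠ ⊥ →
    (∀ j : ι, (∀ i, ∃ c ∈ C i, c j ≠ 0) ∨
      (∀ i i' : Fin t, (∃ c ∈ C i, c j ≠ 0) → (∃ c ∈ C i', c j ≠ 0) → i = i')) →
    ∃ z ∈ myProd C, z ≠ 0 ∧
      hammingNorm z ≤ max (t - 1) (Fintype.card ι + t - ∑ i, finrank F (C i)) := by
  induction N with
  | zero =>
    intro ι _ _ hcard t C hne _
    exfalso
    have hie : IsEmpty ι := Fintype.card_eq_zero_iff.1 (le_antisymm hcard (Nat.zero_le _))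
    apply hne
    rw [eq_bot_iff]
    intro z _
    have hz : z = 0 := funext fun j => isEmptyElim j
    simp [hz]
  | succ N IH =>
    intro ι iF iD hcard t C hne hsc
    rcases isEmpty_or_nonempty ι with hemp | hnem
    · exfalso
      apply hne
      rw [eq_bot_iff]
      intro z _
      have hz : z = 0 := funext fun j => isEmptyElim j
      simp [hz]
    obtain ⟨jar⟩ := hnem
    by_cases hKt : (∑ i, finrank F (C i)) ≤ t
    · obtain ⟨z, hz, hz0⟩ := (Submodule.ne_bot_iff _).1 hne
      refine ⟨z, hz, hz0, le_trans hammingNorm_le_card_fintype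
        (le_trans (by omega) (le_max_right _ _))⟩
    push_neg at hKt
    have hex2 : ∃ i, 2 ≤ finrank F (C i) := by
      by_contra hno
      push_neg at hno
      have hsum : (∑ i, finrank F (C i)) ≤ ∑ _i : Fin t, 1 :=
        Finset.sum_le_sum (fun i _ => by have := hno i; omega)
      simp only [Finset.sum_const, Finset.card_univ, Fintype.card_fin, smul_eq_mul,
        mul_one] at hsum
      omega
    by_cases hfs : ∀ i, fullS (C i)
    · -- full support case
      by_cases hE : ∃ i, 2 ≤ finrank F (C i) ∧ ∃ j,
          (∑ m ∈ Finset.univ.erase i, finrank F ↥(C m ⊓ suppSub F (Rcls (C i) j))) + 1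
            ≤ (Rcls (C i) j).card
      · -- Move A on a class
        obtain ⟨i₁, hk₁, j₁, hsum₁⟩ := hE
        set R := Rcls (C i₁) j₁ with hR
        have hj₁R : j₁ ∈ R := self_mem_Rcls
        have hrpos : 1 ≤ R.card := Finset.card_pos.2 ⟨j₁, hj₁R⟩
        set C' := fun m => if m = i₁ then C i₁ ⊓ suppSub F Rᶜ else C m with hC'
        have hle : ∀ m, C' m ≤ C m := by
          intro m
          rw [hC']
          dsimp only
          by_cases h : m = i₁
          · subst h; rw [if_pos rfl]; exact inf_le_left
          · rw [if_neg h]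
        have hC'i₁ : C' i₁ = C i₁ ⊓ suppSub F Rᶜ := by rw [hC']; simp
        have hsupp' : myProd C' ≤ suppSub F Rᶜ := by
          rw [myProd, Submodule.span_le]
          rintro z ⟨c, hc, rfl⟩
          intro y hy
          have hy' : y ∈ R := by simpa using hy
          rw [Finset.prod_apply]
          apply Finset.prod_eq_zero (Finset.mem_univ i₁)
          have hci₁ : c i₁ ∈ C i₁ ⊓ suppSub F Rᶜ := hC'i₁ ▸ hc i₁
          exact (Submodule.mem_inf.1 hci₁).2 y (by simpa using hy')
        have hdim0 : finrank F (Submodule.map (res F R) (C i₁)) ≤ 1 :=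
          finrank_map_res_Rcls_le_one (C i₁) j₁
        have hre₁ : finrank F (Submodule.map (res F R) (C i₁))
            + finrank F ↥(C i₁ ⊓ suppSub F Rᶜ) = finrank F (C i₁) :=
          finrank_map_res_add R (C i₁)
        have hCib : C i₁ ⊓ suppSub F Rᶜ ≠ ⊥ := ne_bot_of_finrank_pos (by omega)
        obtain ⟨v, hv, hv0⟩ := (Submodule.ne_bot_iff _).1 hCib
        rw [Submodule.mem_inf] at hv
        obtain ⟨x, hx⟩ : ∃ x, v x ≠ 0 := by
          by_contra h; push_neg at h; exact hv0 (funext h)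
        have hxR : x ∉ R := fun hxR => hx (hv.2 x (by simpa using hxR))
        set D := fun m => Submodule.map (res F Rᶜ) (C' m) with hD
        have hneD : myProd D ≠ ⊥ := by
          rw [hD, ← map_res_myProd]
          set c := fun m => if m = i₁ then v else (hfs m x).choose with hc
          have hcm : ∀ m, c m ∈ C' m := by
            intro m
            rw [hc, hC']
            dsimp only
            by_cases h : m = i₁
            · subst h; rw [if_pos rfl, if_pos rfl]; exact Submodule.mem_inf.2 hv
            · rw [if_neg h, if_neg h]; exact ((hfs m x).choose_spec).1
          have hcx : ∀ m, c m x ≠ 0 := by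
            intro m
            rw [hc]
            dsimp only
            by_cases h : m = i₁
            · rw [if_pos h]; exact hx
            · rw [if_neg h]; exact ((hfs m x).choose_spec).2
          apply (Submodule.ne_bot_iff _).2
          refine ⟨res F Rᶜ (∏ m, c m), Submodule.mem_map_of_mem (prod_mem_myProd hcm), ?_⟩
          intro h0
          have hx' := congrFun h0 ⟨x, by simpa using hxR⟩
          rw [res_apply, Finset.prod_apply] at hx'
          obtain ⟨m, _, hm0⟩ := Finset.prod_eq_zero_iff.1 hx'
          exact hcx m hm0
        have hfsD : ∀ (m : Fin t) (y : ↥(Rᶜ)), ∃ c ∈ D m, c y ≠ 0 := by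
          intro m y
          rw [hD]
          dsimp only
          by_cases h : m = i₁
          · rw [h, hC'i₁]
            have hyR : (y : ι) ∉ R := Finset.mem_compl.1 y.2
            have hnrel : ¬ jRel (C i₁) j₁ (y : ι) := fun hrel => hyR (mem_Rcls.2 hrel)
            have himp : ¬ ∀ c ∈ C i₁, c j₁ = 0 → c (y : ι) = 0 :=
              fun himp => hnrel (jRel_of_imp (hfs i₁) himp)
            push_neg at himp
            obtain ⟨cw, hcw, hcj, hcy⟩ := himp
            refine ⟨res F Rᶜ cw, Submodule.mem_map_of_mem ?_, hcy⟩
            refine Submodule.mem_inf.2 ⟨hcw, fun y' hy' => ?_⟩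
            have hy'R : y' ∈ R := by simpa using hy'
            exact vanish_on_Rcls hcw hcj y' hy'R
          · rw [hC']
            dsimp only
            rw [if_neg h]
            obtain ⟨cw, hcw, hcy⟩ := hfs m (y : ι)
            exact ⟨res F Rᶜ cw, Submodule.mem_map_of_mem hcw, hcy⟩
        have hbot' : C' i₁ ⊓ suppSub F Rᶜᶜ = ⊥ := by
          rw [compl_compl, hC'i₁, eq_bot_iff]
          intro w hw
          rw [Submodule.mem_inf, Submodule.mem_inf] at hw
          have hw0 : w = 0 := by
            funext y
            by_cases hy : y ∈ R
            · exact hw.1.2 y (by simpa using hy)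
            · exact hw.2 y hy
          simp [hw0]
        have hDi : finrank F (C i₁) ≤ finrank F (D i₁) + 1 := by
          have h1 : finrank F (D i₁) + finrank F ↥(C' i₁ ⊓ suppSub F Rᶜᶜ) = finrank F (C' i₁) :=
            finrank_map_res_add Rᶜ (C' i₁)
          rw [hbot', finrank_bot, add_zero, hC'i₁] at h1
          omega
        have hDm : ∀ m ∈ Finset.univ.erase i₁,
            finrank F (D m) + finrank F ↥(C m ⊓ suppSub F R) = finrank F (C m) := by
          intro m hm
          have hm' : m ≠ i₁ := Finset.ne_of_mem_erase hm
          have h1 := finrank_map_res_add Rᶜ (C' m)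
          rw [compl_compl] at h1
          have h2 : C' m = C m := by rw [hC']; dsimp only; rw [if_neg hm']
          rw [h2] at h1
          rw [hD]
          dsimp only
          beta_reduce
          rw [h2]
          exact h1
        have hsumD : (∑ i, finrank F (C i)) ≤ (∑ m, finrank F (D m)) + R.card := by
          have e1 : (∑ m ∈ Finset.univ.erase i₁, finrank F (D m))
              + (∑ m ∈ Finset.univ.erase i₁, finrank F ↥(C m ⊓ suppSub F R))
              = ∑ m ∈ Finset.univ.erase i₁, finrank F (C m) := by
            rw [← Finset.sum_add_distrib]
            exact Finset.sum_congr rfl hDm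
          have e2 : (∑ i, finrank F (C i)) = finrank F (C i₁)
              + ∑ m ∈ Finset.univ.erase i₁, finrank F (C m) :=
            (Finset.add_sum_erase _ _ (Finset.mem_univ i₁)).symm
          have e3 : (∑ m, finrank F (D m)) = finrank F (D i₁)
              + ∑ m ∈ Finset.univ.erase i₁, finrank F (D m) :=
            (Finset.add_sum_erase _ _ (Finset.mem_univ i₁)).symm
          omega
        have hrn : R.card ≤ Fintype.card ι := by
          calc R.card ≤ Finset.univ.card := Finset.card_le_univ R
            _ = Fintype.card ι := Finset.card_univ
        have hcardS : Fintype.card ↥(Rᶜ) = Fintype.card ι - R.card := by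
          rw [Fintype.card_coe, Finset.card_compl]
        have hcard' : Fintype.card ↥(Rᶜ) ≤ N := by
          rw [hcardS]; omega
        obtain ⟨z', hz', hz'0, hz'le⟩ := IH ↥(Rᶜ) hcard' t D hneD
          (fun y => Or.inl (fun m => hfsD m y))
        rw [hD] at hz'
        obtain ⟨z, hz, hz0, hzeq⟩ := lift_witness hle hsupp' hz' hz'0
        refine ⟨z, hz, hz0, ?_⟩
        rw [hzeq]
        refine le_trans hz'le ?_
        rw [hcardS]
        refine max_le_max (le_refl _) ?_
        omega
      · -- stuck case
        push_neg at hE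
        obtain ⟨i₂, hki₂⟩ := hex2
        set T := @Finset.filter _ (fun p : Fin t × ι => 2 ≤ finrank F (C p.1))
          (Classical.decPred _) (Finset.univ ×ˢ Finset.univ) with hT
        have memT : ∀ p : Fin t × ι, p ∈ T ↔ 2 ≤ finrank F (C p.1) := by
          intro p
          have := @Finset.mem_filter _ (fun p : Fin t × ι => 2 ≤ finrank F (C p.1))
            (Classical.decPred _) (Finset.univ ×ˢ Finset.univ) p
          rw [hT]
          simpa [Finset.mem_product] using this
        have hTne : T.Nonempty := ⟨(i₂, jar), (memT _).2 hki₂⟩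
        obtain ⟨p₀, hmemT, hmin⟩ := Finset.exists_min_image T
          (fun p => (Rcls (C p.1) p.2).card) hTne
        obtain ⟨i₀, j₀⟩ := p₀
        set R := Rcls (C i₀) j₀ with hR
        have hk₀ : 2 ≤ finrank F (C i₀) := (memT _).1 hmemT
        have hstuck₀ : R.card ≤ ∑ m ∈ Finset.univ.erase i₀, finrank F ↥(C m ⊓ suppSub F R) := by
          have h5 := hE i₀ hk₀ j₀
          rw [← hR] at h5
          omega
        have hrpos : 1 ≤ R.card := Finset.card_pos.2 ⟨j₀, self_mem_Rcls⟩
        obtain ⟨c₁, hc₁, hc₁0, hc₁j⟩ := exists_vanish_ne_zero hk₀ j₀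
        obtain ⟨y₁, hy₁⟩ : ∃ y, c₁ y ≠ 0 := by
          by_contra h; push_neg at h; exact hc₁0 (funext h)
        have hy₁R : y₁ ∉ R := by
          intro hmem
          obtain ⟨β, hβ0, hβ⟩ := mem_Rcls.1 hmem
          exact hy₁ (by rw [hβ c₁ hc₁, hc₁j, mul_zero])
        have hκle : ∀ m, m ≠ i₀ → finrank F ↥(C m ⊓ suppSub F R) ≤ 1 := by
          intro m hm
          by_cases hbot : C m ⊓ suppSub F R = ⊥
          · rw [hbot, finrank_bot]; omega
          obtain ⟨v, hv, hv0⟩ := (Submodule.ne_bot_iff _).1 hbot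
          rw [Submodule.mem_inf] at hv
          obtain ⟨y₀, hy₀⟩ : ∃ y, v y ≠ 0 := by
            by_contra h; push_neg at h; exact hv0 (funext h)
          have hkm : 2 ≤ finrank F (C m) := by
            by_contra hkm
            push_neg at hkm
            have hspan : Submodule.span F {v} = C m := by
              apply Submodule.eq_of_le_of_finrank_le
                (Submodule.span_le.2 (by simp [hv.1]))
              rw [finrank_span_singleton hv0]
              omega
            obtain ⟨c, hc, hcy₁⟩ := hfs m y₁
            rw [← hspan] at hc
            obtain ⟨a, rfl⟩ := Submodule.mem_span_singleton.1 hc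
            have hvy₁ : v y₁ = 0 := hv.2 y₁ hy₁R
            apply hcy₁
            simp [hvy₁]
          have hminm : R.card ≤ (Rcls (C m) y₀).card := hmin (m, y₀) ((memT _).2 hkm)
          have hsub : Rcls (C m) y₀ ⊆ R := by
            intro y' hy'
            obtain ⟨β, hβ0, hβ⟩ := mem_Rcls.1 hy'
            by_contra hy'R
            have h0 : v y' = 0 := hv.2 y' hy'R
            rw [hβ v hv.1] at h0
            rcases mul_eq_zero.1 h0 with h | h
            · exact hβ0 h
            · exact hy₀ h
          have hReq : Rcls (C m) y₀ = R := Finset.eq_of_subset_of_card_le hsub hminm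
          have hVle : C m ⊓ suppSub F R ≤ Submodule.span F {v} := by
            intro w hw
            rw [Submodule.mem_inf] at hw
            have hu : v y₀ • w - w y₀ • v = 0 := by
              funext y
              by_cases hy : y ∈ R
              · rw [← hReq] at hy
                obtain ⟨β, hβ0, hβ⟩ := mem_Rcls.1 hy
                simp only [Pi.sub_apply, Pi.smul_apply, Pi.zero_apply, smul_eq_mul]
                rw [hβ w hw.1, hβ v hv.1]
                ring
              · simp only [Pi.sub_apply, Pi.smul_apply, Pi.zero_apply, smul_eq_mul]
                rw [hw.2 y hy, hv.2 y hy]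
                ring
            have heq : v y₀ • w = w y₀ • v := sub_eq_zero.1 hu
            rw [Submodule.mem_span_singleton]
            refine ⟨w y₀ / v y₀, ?_⟩
            funext y
            have hcy := congrFun heq y
            simp only [Pi.smul_apply, smul_eq_mul] at hcy ⊢
            rw [div_mul_eq_mul_div, div_eq_iff hy₀]
            linear_combination -hcy
          calc finrank F ↥(C m ⊓ suppSub F R)
              ≤ finrank F (Submodule.span F {v}) := Submodule.finrank_mono hVle
            _ = 1 := finrank_span_singleton hv0
        have hrt : R.card ≤ t - 1 := by
          have hb : (∑ m ∈ Finset.univ.erase i₀, finrank F ↥(C m ⊓ suppSub F R))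
              ≤ (Finset.univ.erase i₀).card • 1 :=
            Finset.sum_le_card_nsmul _ _ 1 (fun m hm => hκle m (Finset.ne_of_mem_erase hm))
          rw [Finset.card_erase_of_mem (Finset.mem_univ i₀), Finset.card_univ,
            Fintype.card_fin, smul_eq_mul, mul_one] at hb
          omega
        have hexm : ∃ m, m ≠ i₀ ∧ C m ⊓ suppSub F R ≠ ⊥ := by
          by_contra h
          push_neg at h
          have h0 : (∑ m ∈ Finset.univ.erase i₀, finrank F ↥(C m ⊓ suppSub F R)) = 0 :=
            Finset.sum_eq_zero (fun m hm => by
              rw [h m (Finset.ne_of_mem_erase hm), finrank_bot])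
          omega
        obtain ⟨m₁, hm₁, hVm₁⟩ := hexm
        obtain ⟨v, hv, hv0⟩ := (Submodule.ne_bot_iff _).1 hVm₁
        rw [Submodule.mem_inf] at hv
        obtain ⟨y₀, hy₀⟩ : ∃ y, v y ≠ 0 := by
          by_contra h; push_neg at h; exact hv0 (funext h)
        set c := fun m => if m = m₁ then v else (hfs m y₀).choose with hc
        have hcm : ∀ m, c m ∈ C m := by
          intro m
          rw [hc]
          dsimp only
          by_cases h : m = m₁
          · subst h; rw [if_pos rfl]; exact hv.1
          · rw [if_neg h]; exact ((hfs m y₀).choose_spec).1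
        have hcy₀ : ∀ m, c m y₀ ≠ 0 := by
          intro m
          rw [hc]
          dsimp only
          by_cases h : m = m₁
          · subst h; rw [if_pos rfl]; exact hy₀
          · rw [if_neg h]; exact ((hfs m y₀).choose_spec).2
        refine ⟨∏ m, c m, prod_mem_myProd hcm, ?_, ?_⟩
        · intro h0
          have hz0 := congrFun h0 y₀
          rw [Finset.prod_apply] at hz0
          obtain ⟨m, _, hm0⟩ := Finset.prod_eq_zero_iff.1 hz0
          exact hcy₀ m hm0
        · have hle1 : hammingNorm (∏ m, c m) ≤ hammingNorm v := by
            apply norm_mono_support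
            intro y hy
            by_cases hvy : v y = 0
            · exfalso
              apply hy
              rw [Finset.prod_apply]
              apply Finset.prod_eq_zero (Finset.mem_univ m₁)
              rw [hc]
              dsimp only
              rw [if_pos rfl]
              exact hvy
            · exact hvy
          have hle2 : hammingNorm v ≤ R.card := norm_le_card_of_suppSub hv.2
          exact le_trans hle1 (le_trans hle2 (le_trans (by omega) (le_max_left _ _)))
    · -- not full support: restrict to common support
      push_neg at hfs
      obtain ⟨i₀, j₀, hij₀⟩ : ∃ i j, ∀ c ∈ C i, c j = 0 := by
        obtain ⟨i, hi⟩ := hfs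
        unfold fullS at hi
        push_neg at hi
        obtain ⟨j, hj⟩ := hi
        exact ⟨i, j, fun c hc => by simpa using hj c hc⟩
      set J : Finset ι := @Finset.filter _ (fun j => ∀ i, ∃ c ∈ C i, c j ≠ 0)
        (Classical.decPred _) Finset.univ with hJdef
      have memJ : ∀ j, j ∈ J ↔ ∀ i, ∃ c ∈ C i, c j ≠ 0 := by
        intro j
        have := @Finset.mem_filter _ (fun j => ∀ i, ∃ c ∈ C i, c j ≠ 0)
          (Classical.decPred _) Finset.univ j
        rw [hJdef]
        simpa using this
      have hj₀J : j₀ ∉ J := by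
        rw [memJ]
        push_neg
        exact ⟨i₀, fun c hc => by simp [hij₀ c hc]⟩
      have hJcard : J.card < Fintype.card ι := by
        have hsub : J ⊂ Finset.univ :=
          Finset.ssubset_univ_iff.2 (fun h => hj₀J (h ▸ Finset.mem_univ j₀))
        have := Finset.card_lt_card hsub
        simpa using this
      have hPsupp : myProd C ≤ suppSub F J := by
        rw [myProd, Submodule.span_le]
        rintro z ⟨c, hc, rfl⟩
        intro j hj
        rw [memJ] at hj
        push_neg at hj
        obtain ⟨i₁, hi₁⟩ := hj
        rw [Finset.prod_apply]
        apply Finset.prod_eq_zero (Finset.mem_univ i₁)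
        exact hi₁ (c i₁) (hc i₁)
      set D := fun i => Submodule.map (res F J) (C i) with hD
      have hneD : myProd D ≠ ⊥ := by
        rw [hD, ← map_res_myProd]
        obtain ⟨z, hz, hz0⟩ := (Submodule.ne_bot_iff _).1 hne
        apply (Submodule.ne_bot_iff _).2
        refine ⟨res F J z, Submodule.mem_map_of_mem hz, ?_⟩
        intro h0
        exact hz0 (eq_zero_of_res_eq_zero (hPsupp hz) h0)
      have hfsD : ∀ (i : Fin t) (y : ↥J), ∃ c ∈ D i, c y ≠ 0 := by
        intro i y
        obtain ⟨c, hc, hcy⟩ := (memJ y.1).1 y.2 i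
        exact ⟨res F J c, Submodule.mem_map_of_mem hc, hcy⟩
      have hre : ∀ i, finrank F (D i) + finrank F ↥(C i ⊓ suppSub F Jᶜ) = finrank F (C i) :=
        fun i => finrank_map_res_add J (C i)
      set E := fun i => (@Finset.filter _ (fun j => ∃ c ∈ C i, c j ≠ 0)
        (Classical.decPred _) Finset.univ) \ J with hEdef
      have memE : ∀ i j, j ∈ E i ↔ (∃ c ∈ C i, c j ≠ 0) ∧ j ∉ J := by
        intro i j
        rw [hEdef]
        dsimp only
        rw [Finset.mem_sdiff]
        have := @Finset.mem_filter _ (fun j => ∃ c ∈ C i, c j ≠ 0)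
          (Classical.decPred _) Finset.univ j
        simp only [Finset.mem_univ, true_and] at this
        rw [this]
      have hVle : ∀ i, (C i ⊓ suppSub F Jᶜ) ≤ suppSub F (E i) := by
        intro i v hv
        rw [Submodule.mem_inf] at hv
        intro j hj
        by_contra hvj
        apply hj
        rw [memE]
        refine ⟨⟨v, hv.1, hvj⟩, ?_⟩
        intro hjJ
        exact hvj (hv.2 j (by simp [hjJ]))
      have hEcard : ∀ i, finrank F ↥(C i ⊓ suppSub F Jᶜ) ≤ (E i).card :=
        fun i => finrank_le_card_of_le_suppSub (hVle i)
      have hdisj : ∀ i ∈ (Finset.univ : Finset (Fin t)), ∀ i' ∈ Finset.univ, i ≠ i' →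
          Disjoint (E i) (E i') := by
        intro i _ i' _ hii'
        rw [Finset.disjoint_left]
        intro j hj hj'
        rw [memE] at hj hj'
        rcases hsc j with hall | hone
        · exact hj.2 ((memJ j).2 hall)
        · exact hii' (hone i i' hj.1 hj'.1)
      have hsumE : (∑ i, (E i).card) ≤ Fintype.card ι - J.card := by
        rw [← Finset.card_biUnion hdisj]
        have hsub : Finset.univ.biUnion E ⊆ Jᶜ := by
          intro j hj
          rw [Finset.mem_biUnion] at hj
          obtain ⟨i, _, hji⟩ := hj
          rw [Finset.mem_compl]
          exact ((memE i j).1 hji).2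
        calc (Finset.univ.biUnion E).card ≤ (Jᶜ).card := Finset.card_le_card hsub
          _ = Fintype.card ι - J.card := Finset.card_compl J
      have hcard' : Fintype.card ↥J ≤ N := by
        rw [Fintype.card_coe]
        omega
      obtain ⟨z', hz', hz'0, hz'le⟩ := IH ↥J hcard' t D hneD
        (fun y => Or.inl (fun i => hfsD i y))
      rw [hD] at hz'
      obtain ⟨z, hz, hz0, hzeq⟩ := lift_witness (fun i => le_refl (C i)) hPsupp hz' hz'0
      refine ⟨z, hz, hz0, ?_⟩
      rw [hzeq]
      refine le_trans hz'le ?_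
      rw [Fintype.card_coe]
      refine max_le_max (le_refl _) ?_
      have h1 : (∑ i, finrank F (D i)) + (∑ i, finrank F ↥(C i ⊓ suppSub F Jᶜ))
          = ∑ i, finrank F (C i) := by
        rw [← Finset.sum_add_distrib]
        exact Finset.sum_congr rfl (fun i _ => hre i)
      have h2 : (∑ i, finrank F ↥(C i ⊓ suppSub F Jᶜ)) ≤ Fintype.card ι - J.card :=
        le_trans (Finset.sum_le_sum fun i _ => hEcard i) hsumE
      omega

end PSB

theorem stmt5 {F : Type*} [Field F] [Fintype F] [DecidableEq F] {n t : ℕ}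
    (ht : 1 ≤ t) (C : Fin t → Submodule F (Fin n → F))
    (hne : prodFamily F C ≠ ⊥)
    (hsc : 3 ≤ t → ∀ j : Fin n,
      (∀ i, ∃ c ∈ C i, c j ≠ 0) ∨
      (∀ i i', (∃ c ∈ C i, c j ≠ 0) → (∃ c ∈ C i', c j ≠ 0) → i = i')) :
    dmin (prodFamily F C) ≤ max (t - 1) (n + t - ∑ i, Module.finrank F (C i)) := by
  have hprod : PSB.myProd C = prodFamily F C := rfl
  have hsc' : ∀ j : Fin n, (∀ i, ∃ c ∈ C i, c j ≠ 0) ∨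
      (∀ i i' : Fin t, (∃ c ∈ C i, c j ≠ 0) → (∃ c ∈ C i', c j ≠ 0) → i = i') := by
    by_cases h3 : 3 ≤ t
    · exact hsc h3
    · intro j
      by_cases hall : ∀ i, ∃ c ∈ C i, c j ≠ 0
      · exact Or.inl hall
      · push_neg at hall
        obtain ⟨iw, hiw⟩ := hall
        refine Or.inr (fun i i' hi hi' => ?_)
        by_contra hii'
        have hti : (i : ℕ) < t := i.2
        have hti' : (i' : ℕ) < t := i'.2
        have htiw : (iw : ℕ) < t := iw.2
        have hvne : (i : ℕ) ≠ (i' : ℕ) := fun h => hii' (Fin.ext h)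
        have hcase : (iw : ℕ) = (i : ℕ) ∨ (iw : ℕ) = (i' : ℕ) := by omega
        rcases hcase with h | h
        · have hee : iw = i := Fin.ext h
          cases hee
          obtain ⟨c, hc, hc0⟩ := hi
          exact hc0 (hiw c hc)
        · have hee : iw = i' := Fin.ext h
          cases hee
          obtain ⟨c, hc, hc0⟩ := hi'
          exact hc0 (hiw c hc)
  obtain ⟨z, hz, hz0, hzle⟩ := PSB.main (F := F) n (Fin n) (by simp) t C
    (by rw [hprod]; exact hne) hsc'
  have hz' : z ∈ prodFamily F C := by rw [← hprod]; exact hz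
  have hd : dmin (prodFamily F C) ≤ hammingNorm z := Nat.sInf_le ⟨z, hz', hz0, rfl⟩
  refine le_trans hd ?_
  simpa [Fintype.card_fin] using hzle

end
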